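/- arXiv:1201.0179 — 2 statements merged into one kernel-verified Lean document; each statement's English description precedes it below -/
import Mathlib

section
/- Let 0 < s < s' ≤ 1. There exists a constant C > 0, depending only on s and s', such that for every normed vector space X, every T with 0 < T ≤ 1, every M ≥ 0, and every function f : ℝ → X which is Hölder continuous on [0,T] with exponent s' and constant M, one has ( ∫₀^T ‖f(t)‖² dt + ∫₀^T ∫₀^T ‖f(t) − f(τ)‖² / |t − τ|^{2s+1} dt dτ )^{1/2} ≤ C · T^{1/2} · ( sup_{t ∈ [0,T]} ‖f(t)‖ + M ), where f is additionally assumed bounded on [0,T]. -/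
open MeasureTheory

open intervalIntegral in
private lemma holder_aux (α T τ : ℝ) (hα : -1 < α) (hT : 0 < T) (hT1 : T ≤ 1)
    (hτ0 : 0 ≤ τ) (hτT : τ ≤ T) :
    IntegrableOn (fun t => |t - τ| ^ α) (Set.Icc (0:ℝ) T) volume ∧
    (∫ t in Set.Icc (0:ℝ) T, |t - τ| ^ α) ≤ 2 / (α + 1) := by
  have hα1 : 0 < α + 1 := by linarith
  have e1 : Set.EqOn (fun t => |t - τ| ^ α) (fun t => (τ - t) ^ α) (Set.uIcc 0 τ) := by
    intro t ht
    rw [Set.uIcc_of_le hτ0] at ht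
    simp only
    rw [abs_sub_comm, abs_of_nonneg (by linarith [ht.2] : (0:ℝ) ≤ τ - t)]
  have i1' : IntervalIntegrable (fun t => (τ - t) ^ α) volume 0 τ := by
    have h := ((intervalIntegrable_rpow' (a := 0) (b := τ) hα).comp_sub_left τ)
    simp only [sub_self, sub_zero] at h
    exact h.symm
  have i1 : IntervalIntegrable (fun t => |t - τ| ^ α) volume 0 τ := by
    refine i1'.congr ?_
    intro t ht
    exact (e1 (Set.uIoc_subset_uIcc ht)).symm
  have v1 : (∫ t in (0:ℝ)..τ, |t - τ| ^ α) = τ ^ (α + 1) / (α + 1) := by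
    rw [integral_congr e1]
    have := integral_comp_sub_left (a := (0:ℝ)) (b := τ) (fun x => x ^ α) τ
    simp only [sub_self, sub_zero] at this
    rw [this, integral_symm, integral_rpow (Or.inl hα)]
    rw [Real.zero_rpow (by linarith)]
    ring
  have e2 : Set.EqOn (fun t => |t - τ| ^ α) (fun t => (t - τ) ^ α) (Set.uIcc τ T) := by
    intro t ht
    rw [Set.uIcc_of_le hτT] at ht
    simp only
    rw [abs_of_nonneg (by linarith [ht.1] : (0:ℝ) ≤ t - τ)]
  have i2' : IntervalIntegrable (fun t => (t - τ) ^ α) volume τ T := by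
    have h := ((intervalIntegrable_rpow' (a := 0) (b := T - τ) hα).comp_sub_right τ)
    simp only [zero_add, sub_add_cancel] at h
    exact h
  have i2 : IntervalIntegrable (fun t => |t - τ| ^ α) volume τ T := by
    refine i2'.congr ?_
    intro t ht
    exact (e2 (Set.uIoc_subset_uIcc ht)).symm
  have v2 : (∫ t in τ..T, |t - τ| ^ α) = (T - τ) ^ (α + 1) / (α + 1) := by
    rw [integral_congr e2]
    have := integral_comp_sub_right (a := τ) (b := T) (fun x => x ^ α) τ
    simp only [sub_self] at this
    rw [this, integral_rpow (Or.inl hα), Real.zero_rpow (by linarith)]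
    ring
  constructor
  · have h1 : IntegrableOn (fun t => |t - τ| ^ α) (Set.Icc (0:ℝ) τ) volume := by
      rw [integrableOn_Icc_iff_integrableOn_Ioc]
      exact (intervalIntegrable_iff_integrableOn_Ioc_of_le hτ0).mp i1
    have h2 : IntegrableOn (fun t => |t - τ| ^ α) (Set.Icc τ T) volume := by
      rw [integrableOn_Icc_iff_integrableOn_Ioc]
      exact (intervalIntegrable_iff_integrableOn_Ioc_of_le hτT).mp i2
    have := h1.union h2
    rwa [Set.Icc_union_Icc_eq_Icc hτ0 hτT] at this
  · have heq : (∫ t in Set.Icc (0:ℝ) T, |t - τ| ^ α) = ∫ t in (0:ℝ)..T, |t - τ| ^ α := by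
      rw [integral_of_le hT.le, integral_Icc_eq_integral_Ioc]
    rw [heq, ← integral_add_adjacent_intervals i1 i2, v1, v2]
    have b1 : τ ^ (α + 1) ≤ 1 := Real.rpow_le_one hτ0 (by linarith) hα1.le
    have b2 : (T - τ) ^ (α + 1) ≤ 1 :=
      Real.rpow_le_one (by linarith) (by linarith) hα1.le
    rw [← add_div, div_le_div_iff₀ hα1 hα1]
    nlinarith

universe u

/-- Estimate (2.5): `‖f‖_{H^s(0,T;X)} ≤ C_{s,s'} T^(1/2) ‖f‖_{C^{s'}([0,T];X)}`
for all `0 < T ≤ 1` and all `f` Hölder continuous on `[0,T]` with exponent `s'`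
and constant `M`, where `0 < s < s' ≤ 1` and `C` depends only on `s, s'`. -/
theorem Hs_norm_le_of_holder (s s' : ℝ) (hs : 0 < s) (hss' : s < s') (hs' : s' ≤ 1) :
    ∃ C : ℝ, 0 < C ∧
      ∀ (X : Type u) [NormedAddCommGroup X] [NormedSpace ℝ X],
        ∀ (T M : ℝ), 0 < T → T ≤ 1 → 0 ≤ M →
          ∀ f : ℝ → X,
            (∀ t ∈ Set.Icc (0:ℝ) T, ∀ τ ∈ Set.Icc (0:ℝ) T,
              ‖f t - f τ‖ ≤ M * |t - τ| ^ s') →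
            BddAbove ((fun t => ‖f t‖) '' Set.Icc (0:ℝ) T) →
            Real.sqrt ((∫ t in Set.Icc (0:ℝ) T, ‖f t‖ ^ 2) +
                ∫ τ in Set.Icc (0:ℝ) T, ∫ t in Set.Icc (0:ℝ) T,
                  ‖f t - f τ‖ ^ 2 / |t - τ| ^ (2*s + 1)) ≤
              C * Real.sqrt T *
                (sSup ((fun t => ‖f t‖) '' Set.Icc (0:ℝ) T) + M) := by
  set α : ℝ := 2 * s' - (2 * s + 1) with hαdef
  have hα : -1 < α := by rw [hαdef]; linarith
  have hα1 : 0 < α + 1 := by linarith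
  set K : ℝ := 2 / (α + 1) with hKdef
  have hK : 0 < K := div_pos two_pos hα1
  refine ⟨Real.sqrt (1 + K), Real.sqrt_pos.mpr (by linarith), ?_⟩
  intro X _ _ T M hT hT1 hM f hf hbdd
  set S := sSup ((fun t => ‖f t‖) '' Set.Icc (0:ℝ) T) with hSdef
  have hSle : ∀ t ∈ Set.Icc (0:ℝ) T, ‖f t‖ ≤ S :=
    fun t ht => le_csSup hbdd ⟨t, ht, rfl⟩
  have hS0 : 0 ≤ S := le_trans (norm_nonneg _) (hSle 0 ⟨le_refl 0, hT.le⟩)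
  have hvol : (volume (Set.Icc (0:ℝ) T)).toReal = T := by
    rw [Real.volume_Icc, sub_zero, ENNReal.toReal_ofReal hT.le]
  have hconst : ∀ c : ℝ, IntegrableOn (fun _ : ℝ => c) (Set.Icc (0:ℝ) T) volume :=
    fun c => integrableOn_const (by rw [Real.volume_Icc]; exact ENNReal.ofReal_ne_top)
  -- first integral
  have h1 : (∫ t in Set.Icc (0:ℝ) T, ‖f t‖ ^ 2) ≤ S ^ 2 * T := by
    have := integral_mono_of_nonneg (μ := volume.restrict (Set.Icc (0:ℝ) T))
      (f := fun t => ‖f t‖ ^ 2) (g := fun _ => S ^ 2)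
      (Filter.Eventually.of_forall fun t => by positivity) (hconst (S ^ 2)) ?_
    · rw [setIntegral_const, measureReal_def, hvol, smul_eq_mul, mul_comm] at this
      exact this
    · filter_upwards [ae_restrict_mem measurableSet_Icc] with t ht
      exact pow_le_pow_left₀ (norm_nonneg _) (hSle t ht) 2
  -- inner integral bound
  have hinner : ∀ τ ∈ Set.Icc (0:ℝ) T,
      (∫ t in Set.Icc (0:ℝ) T, ‖f t - f τ‖ ^ 2 / |t - τ| ^ (2 * s + 1)) ≤ M ^ 2 * K := by
    intro τ hτ
    obtain ⟨hint, hval⟩ := holder_aux α T τ hα hT hT1 hτ.1 hτ.2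
    have hdom : ∀ t ∈ Set.Icc (0:ℝ) T,
        ‖f t - f τ‖ ^ 2 / |t - τ| ^ (2 * s + 1) ≤ M ^ 2 * |t - τ| ^ α := by
      intro t ht
      rcases eq_or_ne t τ with rfl | hne
      · simp only [sub_self, norm_zero]
        rw [zero_pow (by norm_num), zero_div]
        positivity
      · have habs : 0 < |t - τ| := abs_pos.mpr (sub_ne_zero.mpr hne)
        have hfb : ‖f t - f τ‖ ^ 2 ≤ M ^ 2 * |t - τ| ^ (2 * s') := by
          have := hf t ht τ hτ
          have h2 : ‖f t - f τ‖ ^ 2 ≤ (M * |t - τ| ^ s') ^ 2 :=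
            pow_le_pow_left₀ (norm_nonneg _) this 2
          calc ‖f t - f τ‖ ^ 2 ≤ (M * |t - τ| ^ s') ^ 2 := h2
            _ = M ^ 2 * (|t - τ| ^ s') ^ 2 := by ring
            _ = M ^ 2 * |t - τ| ^ (2 * s') := by
                rw [← Real.rpow_natCast (|t - τ| ^ s') 2, ← Real.rpow_mul (abs_nonneg _)]
                norm_num [mul_comm]
        calc ‖f t - f τ‖ ^ 2 / |t - τ| ^ (2 * s + 1)
            ≤ M ^ 2 * |t - τ| ^ (2 * s') / |t - τ| ^ (2 * s + 1) := by
              exact div_le_div_of_nonneg_right hfb (Real.rpow_pos_of_pos habs _).le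
          _ = M ^ 2 * |t - τ| ^ α := by
              rw [mul_div_assoc, ← Real.rpow_sub habs, hαdef]
    have hb : (fun t => ‖f t - f τ‖ ^ 2 / |t - τ| ^ (2 * s + 1)) ≤ᵐ[volume.restrict (Set.Icc (0:ℝ) T)]
        fun t => M ^ 2 * |t - τ| ^ α := by
      filter_upwards [ae_restrict_mem measurableSet_Icc] with t ht using hdom t ht
    calc (∫ t in Set.Icc (0:ℝ) T, ‖f t - f τ‖ ^ 2 / |t - τ| ^ (2 * s + 1))
        ≤ ∫ t in Set.Icc (0:ℝ) T, M ^ 2 * |t - τ| ^ α :=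
          integral_mono_of_nonneg (Filter.Eventually.of_forall fun t => by positivity)
            (hint.const_mul _) hb
      _ = M ^ 2 * ∫ t in Set.Icc (0:ℝ) T, |t - τ| ^ α := MeasureTheory.integral_const_mul _ _
      _ ≤ M ^ 2 * K := mul_le_mul_of_nonneg_left hval (sq_nonneg M)
  -- outer integral
  have h2 : (∫ τ in Set.Icc (0:ℝ) T, ∫ t in Set.Icc (0:ℝ) T,
      ‖f t - f τ‖ ^ 2 / |t - τ| ^ (2 * s + 1)) ≤ M ^ 2 * K * T := by
    have hc : (∫ _ in Set.Icc (0:ℝ) T, (M ^ 2 * K)) = M ^ 2 * K * T := by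
      rw [setIntegral_const, measureReal_def, hvol, smul_eq_mul]; ring
    refine le_trans (integral_mono_of_nonneg
      (Filter.Eventually.of_forall fun τ => integral_nonneg fun t => by positivity)
      (hconst _) ?_) hc.le
    filter_upwards [ae_restrict_mem measurableSet_Icc] with τ hτ using hinner τ hτ
  -- conclude
  have hsum : (∫ t in Set.Icc (0:ℝ) T, ‖f t‖ ^ 2) +
      (∫ τ in Set.Icc (0:ℝ) T, ∫ t in Set.Icc (0:ℝ) T,
        ‖f t - f τ‖ ^ 2 / |t - τ| ^ (2 * s + 1)) ≤ (1 + K) * ((S + M) ^ 2 * T) := by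
    nlinarith [sq_nonneg S, sq_nonneg M, mul_pos hK hT, sq_nonneg (S + M), hT.le,
      mul_nonneg hS0 hM]
  calc Real.sqrt _ ≤ Real.sqrt ((1 + K) * ((S + M) ^ 2 * T)) := Real.sqrt_le_sqrt hsum
    _ = Real.sqrt (1 + K) * Real.sqrt T * (S + M) := by
        rw [Real.sqrt_mul (by linarith), Real.sqrt_mul (by positivity),
          Real.sqrt_sq (by positivity)]
        ring
end

section
/- Let E be a real inner product space, R > 0, and x ∈ E with ‖x‖ = R. Define g : ℝ × E → ℝ by g(y₀, y) = ⟨x, y⟩/R − R + √((⟨x, y⟩/R)² + (R + y₀)² − ‖y‖²). Then g(0, 0) = 0, g is Fréchet differentiable at (0, 0), and its Fréchet derivative at (0, 0) is the continuous linear map (w₀, w) ↦ w₀ + ⟨x, w⟩/R. -/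
open scoped RealInnerProductSpace

/-- The height function `g(y₀, y) = ⟨x,y⟩/R − R + √((⟨x,y⟩/R)² + (R+y₀)² − ‖y‖²)`
satisfies `g(0,0) = 0`, is Fréchet differentiable at `(0,0)`, and its derivative
there is the continuous linear map `(w₀, w) ↦ w₀ + ⟨x,w⟩/R`. -/
theorem hanzawa_height_fderiv_at_zero
    (E : Type*) [NormedAddCommGroup E] [InnerProductSpace ℝ E]
    (R : ℝ) (hR : 0 < R) (x : E) (hx : ‖x‖ = R) :
    ∃ L : ℝ × E →L[ℝ] ℝ,
      (∀ (w₀ : ℝ) (w : E), L (w₀, w) = w₀ + ⟪x, w⟫ / R) ∧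
      (fun p : ℝ × E =>
          ⟪x, p.2⟫ / R - R +
            Real.sqrt ((⟪x, p.2⟫ / R) ^ 2 + (R + p.1) ^ 2 - ‖p.2‖ ^ 2)) (0, 0) = 0 ∧
      HasFDerivAt
        (fun p : ℝ × E =>
          ⟪x, p.2⟫ / R - R +
            Real.sqrt ((⟪x, p.2⟫ / R) ^ 2 + (R + p.1) ^ 2 - ‖p.2‖ ^ 2))
        L (0, 0) := by
  have hRne : R ≠ 0 := hR.ne'
  set a : ℝ × E →L[ℝ] ℝ :=
    (innerSL ℝ x).comp (ContinuousLinearMap.snd ℝ ℝ E) with ha_def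
  have ha : HasFDerivAt (fun p : ℝ × E => ⟪x, p.2⟫) a (0, 0) := a.hasFDerivAt
  have h1 : HasFDerivAt (fun p : ℝ × E => ⟪x, p.2⟫ / R) (R⁻¹ • a) (0, 0) := by
    simpa [div_eq_inv_mul, smul_eq_mul, Pi.smul_def] using ha.const_smul R⁻¹
  -- square of first term
  have h1sq : HasFDerivAt (fun p : ℝ × E => (⟪x, p.2⟫ / R) ^ 2)
      ((⟪x, ((0:ℝ×E)).2⟫ / R) • (R⁻¹ • a) + (⟪x, ((0:ℝ×E)).2⟫ / R) • (R⁻¹ • a)) (0, 0) := by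
    simpa [sq, Pi.mul_def] using h1.mul h1
  -- (R + p.1)^2
  have h2 : HasFDerivAt (fun p : ℝ × E => R + p.1)
      (ContinuousLinearMap.fst ℝ ℝ E) (0, 0) :=
    by simpa using (hasFDerivAt_fst (𝕜 := ℝ) (p := ((0, 0) : ℝ × E))).const_add R
  have h2sq : HasFDerivAt (fun p : ℝ × E => (R + p.1) ^ 2)
      ((R + ((0:ℝ×E)).1) • (ContinuousLinearMap.fst ℝ ℝ E)
        + (R + ((0:ℝ×E)).1) • (ContinuousLinearMap.fst ℝ ℝ E)) (0, 0) := by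
    simpa [sq, Pi.mul_def] using h2.mul h2
  -- ‖p.2‖^2 as inner
  have hsnd : HasFDerivAt (fun p : ℝ × E => p.2)
      (ContinuousLinearMap.snd ℝ ℝ E) (0, 0) := hasFDerivAt_snd
  have h3 := hsnd.inner ℝ hsnd
  have h3' : HasFDerivAt (fun p : ℝ × E => ‖p.2‖ ^ 2)
      ((fderivInnerCLM ℝ (((0 : ℝ × E)).2, ((0 : ℝ × E)).2)).comp
        ((ContinuousLinearMap.snd ℝ ℝ E).prod (ContinuousLinearMap.snd ℝ ℝ E))) (0, 0) := by
    simpa [real_inner_self_eq_norm_sq] using h3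
  have hin := (h1sq.add h2sq).sub h3'
  -- value of inner function at 0
  have hval : ((⟪x, ((0:ℝ×E)).2⟫ / R) ^ 2 + (R + ((0:ℝ×E)).1) ^ 2 - ‖((0:ℝ×E)).2‖ ^ 2) = R ^ 2 := by
    simp
  have hsqrt := (Real.hasDerivAt_sqrt (by rw [hval]; positivity :
      ((⟪x, ((0:ℝ×E)).2⟫ / R) ^ 2 + (R + ((0:ℝ×E)).1) ^ 2 - ‖((0:ℝ×E)).2‖ ^ 2) ≠ 0)).comp_hasFDerivAt
      (0, 0) hin
  have hA : HasFDerivAt (fun p : ℝ × E => ⟪x, p.2⟫ / R - R) (R⁻¹ • a) (0, 0) :=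
    h1.sub_const R
  have htot := hA.add hsqrt
  refine ⟨_, ?_, ?_, htot⟩
  · intro w₀ w
    have hs : Real.sqrt ((⟪x, (0:E)⟫ / R) ^ 2 + (R + (0:ℝ)) ^ 2 - ‖(0:E)‖ ^ 2) = R := by
      simp [Real.sqrt_sq hR.le]
    simp [ha_def, hs, fderivInnerCLM]
    ring_nf
    rw [Real.sqrt_sq hR.le]
    field_simp
    ring
  · simp [Real.sqrt_sq hR.le]
end
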